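/- Let Γ be a finite simple graph with generators g₁,…,gₙ of the right-angled Artin group A_Γ, let P be the set of pairs {i,j} with g_i g_j ≠ g_j g_i, and let X = ∏_{i=1}^n {0,1}^ω × ∏_{{i,j}∈P} {i,j,∅}^ω. Define homeomorphisms h_i of X as in the paper's five-piece construction (using the subcubes S_i where all coordinates x_{ij}, j ∈ P_i, begin with symbol i, the binary prefix cubes C_i(α), and the canonical prepending maps F_i and L_{i,α}). Then for all i, j, if g_i and g_j commute in A_Γ, the homeomorphisms h_i and h_j commute. -/

import Mathlib

/-- The group of self-homeomorphisms of a topological space. -/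
instance homeoGroup (X : Type*) [TopologicalSpace X] : Group (X ≃ₜ X) where
  mul f g := g.trans f
  one := Homeomorph.refl X
  inv := Homeomorph.symm
  mul_assoc f g h := rfl
  one_mul f := rfl
  mul_one f := rfl
  inv_mul_cancel f := by ext x; exact f.symm_apply_apply x

/-- Prepend a finite word to an infinite sequence. -/
def prependSeq {A : Type*} (α : List A) (x : ℕ → A) : ℕ → A :=
  fun k => if h : k < α.length then α.get ⟨k, h⟩ else x (k - α.length)

/-- `x` begins with the finite word `α`. -/
def beginsWith {A : Type*} (α : List A) (x : ℕ → A) : Prop :=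
  ∃ y, x = prependSeq α y

/-- The subcube of the Cantor cube `∏ i, (A i)^ω` determined by a tuple of prefixes. -/
def subcube {ι : Type*} (A : ι → Type*) (α : ∀ i, List (A i)) :
    Set (∀ i, ℕ → A i) :=
  {x | ∀ i, beginsWith (α i) (x i)}

/-- Prepend a tuple of finite words coordinatewise. -/
def cubePrepend {ι : Type*} (A : ι → Type*) (α : ∀ i, List (A i))
    (y : ∀ i, ℕ → A i) : ∀ i, ℕ → A i :=
  fun i => prependSeq (α i) (y i)


/-- Relators of a right-angled Artin group: commutators of adjacent generators. -/
def raagRels {V : Type*} (G : SimpleGraph V) : Set (FreeGroup V) :=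
  {r | ∃ i j, G.Adj i j ∧
    r = FreeGroup.of i * FreeGroup.of j * (FreeGroup.of i)⁻¹ * (FreeGroup.of j)⁻¹}

/-- The right-angled Artin group of a simple graph. -/
def RAAG {V : Type*} (G : SimpleGraph V) := PresentedGroup (raagRels G)

noncomputable instance {V : Type*} (G : SimpleGraph V) : Group (RAAG G) := by
  unfold RAAG; infer_instance

/-- The standard generators of a right-angled Artin group. -/
def raagGen {V : Type*} (G : SimpleGraph V) (v : V) : RAAG G :=
  PresentedGroup.of v

variable {n : ℕ}

/-- The set `P` of (unordered) pairs of non-commuting generators. -/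
def ncP (G : SimpleGraph (Fin n)) : Set (Sym2 (Fin n)) :=
  {p | ∃ i j, p = s(i, j) ∧ ¬ Commute (raagGen G i) (raagGen G j)}

/-- Index set for the Cantor cube `X`: one binary coordinate for each generator
and one coordinate for each non-commuting pair. -/
def raagIdx (G : SimpleGraph (Fin n)) : Type := (Fin n) ⊕ (ncP G)

/-- The alphabets of the cube `X`: `{0,1}` for generator coordinates and
`{i, j, ∅}` for the coordinate of a pair `{i,j} ∈ P`. -/
def raagAlph (G : SimpleGraph (Fin n)) : raagIdx G → Type :=
  fun k => match k with
  | Sum.inl _ => Bool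
  | Sum.inr p => Option {v : Fin n // v ∈ (p : Sym2 (Fin n))}

noncomputable instance (G : SimpleGraph (Fin n)) (k : raagIdx G) :
    TopologicalSpace (raagAlph G k) := ⊥

instance (G : SimpleGraph (Fin n)) (k : raagIdx G) :
    DiscreteTopology (raagAlph G k) := ⟨rfl⟩

/-- The Cantor cube `X` of the construction. -/
abbrev raagCube (G : SimpleGraph (Fin n)) : Type := ∀ k, ℕ → raagAlph G k

/-- `C_i(α)`: points whose binary coordinate `x_i` begins with `α`. -/
def Cset (G : SimpleGraph (Fin n)) (i : Fin n) (α : List Bool) :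
    Set (raagCube G) :=
  {x | beginsWith α (x (Sum.inl i))}

/-- `S_i`: points all of whose coordinates `x_{ij}`, `j ∈ P_i`, begin with `i`. -/
def Scube (G : SimpleGraph (Fin n)) (i : Fin n) : Set (raagCube G) :=
  {x | ∀ (p : ncP G) (h : i ∈ (p : Sym2 (Fin n))), x (Sum.inr p) 0 = some ⟨i, h⟩}

open Classical in
/-- `F_i`: prepend the symbol `i` to each coordinate `x_{ij}`, `j ∈ P_i`. -/
noncomputable def Fmap (G : SimpleGraph (Fin n)) (i : Fin n) :
    raagCube G → raagCube G := fun x k =>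
  match k with
  | Sum.inl j => x (Sum.inl j)
  | Sum.inr p =>
      if h : i ∈ (p : Sym2 (Fin n)) then
        prependSeq [some ⟨i, h⟩] (x (Sum.inr p))
      else x (Sum.inr p)

open Classical in
/-- `F_i⁻¹`: delete the first symbol of each coordinate `x_{ij}`, `j ∈ P_i`. -/
noncomputable def Fdrop (G : SimpleGraph (Fin n)) (i : Fin n) :
    raagCube G → raagCube G := fun x k =>
  match k with
  | Sum.inl j => x (Sum.inl j)
  | Sum.inr p =>
      if i ∈ (p : Sym2 (Fin n)) then (fun m => x (Sum.inr p) (m + 1))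
      else x (Sum.inr p)

/-- `L_{i,α}`: prepend the binary word `α` to the coordinate `x_i`. -/
def Lmap (G : SimpleGraph (Fin n)) (i : Fin n) (α : List Bool) :
    raagCube G → raagCube G := fun x k =>
  match k with
  | Sum.inl j => if j = i then prependSeq α (x (Sum.inl j)) else x (Sum.inl j)
  | Sum.inr p => x (Sum.inr p)

/-- `L_{i,α}⁻¹` for a word of length `m`: delete the first `m` symbols of `x_i`. -/
def Ldrop (G : SimpleGraph (Fin n)) (i : Fin n) (m : ℕ) :
    raagCube G → raagCube G := fun x k =>
  match k with
  | Sum.inl j => if j = i then (fun t => x (Sum.inl j) (t + m)) else x (Sum.inl j)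
  | Sum.inr p => x (Sum.inr p)

/-- `S_{ii} = F_i(S_i)`. -/
def Sii (G : SimpleGraph (Fin n)) (i : Fin n) : Set (raagCube G) :=
  Fmap G i '' Scube G i

open Classical in
/-- The five-piece homeomorphism `h_i` of the paper's construction. -/
noncomputable def hmap (G : SimpleGraph (Fin n)) (i : Fin n) :
    raagCube G → raagCube G := fun x =>
  if x ∉ Scube G i then Lmap G i [true, false] (Fmap G i x)
  else if x ∈ Sii G i then x
  else if beginsWith [true] (x (Sum.inl i)) then Lmap G i [true] x
  else if beginsWith [false, true] (x (Sum.inl i)) then Fdrop G i (Ldrop G i 2 x)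
  else Ldrop G i 1 x

/-- The coordinates touched (read and possibly changed) by `h_i`. -/
def touches (G : SimpleGraph (Fin n)) (i : Fin n) : raagIdx G → Prop :=
  fun k => match k with
  | Sum.inl a => a = i
  | Sum.inr p => i ∈ (p : Sym2 (Fin n))

section locality

variable {G : SimpleGraph (Fin n)} {i : Fin n} {x y : raagCube G} {k : raagIdx G}

lemma Lmap_congr {α : List Bool} (h : x k = y k) :
    Lmap G i α x k = Lmap G i α y k := by
  cases k with
  | inl a => simp only [Lmap]; rw [h]
  | inr p => simpa only [Lmap] using h

lemma Ldrop_congr {m : ℕ} (h : x k = y k) :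
    Ldrop G i m x k = Ldrop G i m y k := by
  cases k with
  | inl a => simp only [Ldrop]; rw [h]
  | inr p => simpa only [Ldrop] using h

lemma Fmap_congr (h : x k = y k) : Fmap G i x k = Fmap G i y k := by
  cases k with
  | inl a => simpa only [Fmap] using h
  | inr p => simp only [Fmap]; rw [h]

lemma Fdrop_congr (h : x k = y k) : Fdrop G i x k = Fdrop G i y k := by
  cases k with
  | inl a => simpa only [Fdrop] using h
  | inr p => simp only [Fdrop]; rw [h]

lemma Lmap_untouched {α : List Bool} (hk : ¬ touches G i k) :
    Lmap G i α x k = x k := by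
  cases k with
  | inl a => have hk' : ¬ a = i := hk; simp only [Lmap]; rw [if_neg hk']
  | inr p => rfl

lemma Ldrop_untouched {m : ℕ} (hk : ¬ touches G i k) :
    Ldrop G i m x k = x k := by
  cases k with
  | inl a => have hk' : ¬ a = i := hk; simp only [Ldrop]; rw [if_neg hk']
  | inr p => rfl

lemma Fmap_untouched (hk : ¬ touches G i k) : Fmap G i x k = x k := by
  cases k with
  | inl a => rfl
  | inr p =>
    have hk' : ¬ i ∈ (p : Sym2 (Fin n)) := hk
    simp only [Fmap]; rw [dif_neg hk']

lemma Fdrop_untouched (hk : ¬ touches G i k) : Fdrop G i x k = x k := by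
  cases k with
  | inl a => rfl
  | inr p =>
    have hk' : ¬ i ∈ (p : Sym2 (Fin n)) := hk
    simp only [Fdrop]; rw [if_neg hk']

lemma hmap_untouched (hk : ¬ touches G i k) : hmap G i x k = x k := by
  unfold hmap
  split_ifs <;>
    simp only [Lmap_untouched hk, Fmap_untouched hk, Fdrop_untouched hk,
      Ldrop_untouched hk]

lemma Scube_agree (hag : ∀ k, touches G i k → x k = y k) :
    x ∈ Scube G i ↔ y ∈ Scube G i := by
  unfold Scube
  simp only [Set.mem_setOf_eq]
  constructor <;> intro H p h
  · rw [← hag (Sum.inr p) h]; exact H p h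
  · rw [hag (Sum.inr p) h]; exact H p h

lemma Sii_iff :
    x ∈ Sii G i ↔ ∀ (p : ncP G) (h : i ∈ (p : Sym2 (Fin n))),
      x (Sum.inr p) 0 = some ⟨i, h⟩ ∧ x (Sum.inr p) 1 = some ⟨i, h⟩ := by
  constructor
  · rintro ⟨z, hz, rfl⟩ p h
    simp only [Fmap, dif_pos h, prependSeq]
    exact ⟨rfl, hz p h⟩
  · intro H
    refine ⟨Fdrop G i x, fun p h => ?_, ?_⟩
    · simp only [Fdrop, if_pos h]
      exact (H p h).2
    · funext k
      cases k with
      | inl a => rfl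
      | inr p =>
        simp only [Fmap, Fdrop]
        by_cases h : i ∈ (p : Sym2 (Fin n))
        · rw [dif_pos h, if_pos h]
          funext m
          cases m with
          | zero => exact ((H p h).1).symm
          | succ m =>
            unfold prependSeq
            rw [dif_neg (by show ¬ (m + 1 < 1); omega)]
            rfl
        · rw [dif_neg h, if_neg h]

lemma Sii_agree (hag : ∀ k, touches G i k → x k = y k) :
    x ∈ Sii G i ↔ y ∈ Sii G i := by
  rw [Sii_iff, Sii_iff]
  constructor <;> intro H p h
  · rw [← hag (Sum.inr p) h]; exact H p h
  · rw [hag (Sum.inr p) h]; exact H p h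

lemma hmap_agree (hag : ∀ k, touches G i k → x k = y k) (hk : touches G i k) :
    hmap G i x k = hmap G i y k := by
  have hk' : x k = y k := hag k hk
  have hxi : x (Sum.inl i) = y (Sum.inl i) := hag (Sum.inl i) rfl
  have hS := Scube_agree hag
  have hSii := Sii_agree hag
  unfold hmap
  by_cases h1 : y ∈ Scube G i
  · rw [if_neg (not_not_intro (hS.mpr h1)), if_neg (not_not_intro h1)]
    by_cases h2 : y ∈ Sii G i
    · rw [if_pos (hSii.mpr h2), if_pos h2]; exact hk'
    · rw [if_neg (fun h => h2 (hSii.mp h)), if_neg h2]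
      by_cases h3 : beginsWith [true] (y (Sum.inl i))
      · rw [if_pos (hxi ▸ h3), if_pos h3]
        exact Lmap_congr hk'
      · rw [if_neg (fun h => h3 (hxi ▸ h)), if_neg h3]
        by_cases h4 : beginsWith [false, true] (y (Sum.inl i))
        · rw [if_pos (hxi ▸ h4), if_pos h4]
          exact Fdrop_congr (Ldrop_congr hk')
        · rw [if_neg (fun h => h4 (hxi ▸ h)), if_neg h4]
          exact Ldrop_congr hk'
  · rw [if_pos (fun h => h1 (hS.mp h)), if_pos h1]
    exact Lmap_congr (Fmap_congr hk')

end locality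

lemma touches_disjoint {G : SimpleGraph (Fin n)} {i j : Fin n}
    (hne : i ≠ j) (hij : Commute (raagGen G i) (raagGen G j))
    {k : raagIdx G} (hi : touches G i k) (hj : touches G j k) : False := by
  cases k with
  | inl a => exact hne (hi.symm.trans hj)
  | inr p =>
    have hp : (p : Sym2 (Fin n)) = s(i, j) :=
      (Sym2.mem_and_mem_iff hne).mp ⟨hi, hj⟩
    obtain ⟨a, b, hab, hnc⟩ := p.2
    rw [hp] at hab
    rcases Sym2.eq_iff.mp hab with ⟨rfl, rfl⟩ | ⟨rfl, rfl⟩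
    · exact hnc hij
    · exact hnc hij.symm

/-- If the generators `g_i` and `g_j` commute in `A_Γ`, then the homeomorphisms
`h_i` and `h_j` commute. -/
theorem hmap_commute_of_commute (G : SimpleGraph (Fin n)) (i j : Fin n)
    (hij : Commute (raagGen G i) (raagGen G j)) :
    ∀ x : raagCube G, hmap G i (hmap G j x) = hmap G j (hmap G i x) := by
  rcases eq_or_ne i j with rfl | hne
  · intro x; rfl
  intro x
  funext k
  by_cases hTi : touches G i k <;> by_cases hTj : touches G j k
  · exact absurd hTj (fun h => touches_disjoint hne hij hTi h)
  · rw [hmap_agree (fun k' hk' => hmap_untouched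
        (fun h => touches_disjoint hne hij hk' h)) hTi,
      hmap_untouched hTj]
  · rw [hmap_untouched hTi,
      hmap_agree (fun k' hk' => hmap_untouched
        (fun h => touches_disjoint hne hij h hk')) hTj]
  · rw [hmap_untouched hTi, hmap_untouched hTj,
      hmap_untouched hTj, hmap_untouched hTi]
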